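/- Let r : [0,∞) → ℝ be continuous and strictly positive. If r is monotone non-decreasing (respectively non-increasing) on [0,∞), then for every t > 0 the geometric aging intensity satisfies L^G(t) ≥ 1 (respectively L^G(t) ≤ 1) and the harmonic aging intensity satisfies L^H(t) ≥ 1 (respectively L^H(t) ≤ 1). -/
import Mathlib


theorem IFR_DFR_implies_GAI_HAI_bounds
    (r : ℝ → ℝ) (hc : ContinuousOn r (Set.Ici 0))
    (hpos : ∀ u ∈ Set.Ici (0 : ℝ), 0 < r u) :
    (MonotoneOn r (Set.Ici 0) →
      ∀ t > (0:ℝ),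
        (1:ℝ) ≤ r t / Real.exp ((1 / t) * ∫ u in (0:ℝ)..t, Real.log (r u)) ∧
        (1:ℝ) ≤ r t / ((1 / t) * ∫ u in (0:ℝ)..t, (r u)⁻¹)⁻¹) ∧
    (AntitoneOn r (Set.Ici 0) →
      ∀ t > (0:ℝ),
        r t / Real.exp ((1 / t) * ∫ u in (0:ℝ)..t, Real.log (r u)) ≤ 1 ∧
        r t / ((1 / t) * ∫ u in (0:ℝ)..t, (r u)⁻¹)⁻¹ ≤ 1) := by
  constructor
  · intro hmono t ht
    have ht0 : (0:ℝ) ≤ t := le_of_lt ht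
    have hsub : Set.Icc (0:ℝ) t ⊆ Set.Ici 0 := Set.Icc_subset_Ici_self
    have hct : ContinuousOn r (Set.Icc 0 t) := hc.mono hsub
    have hrt : 0 < r t := hpos t ht0
    have hIntLog : IntervalIntegrable (fun u => Real.log (r u)) MeasureTheory.volume 0 t :=
      (ContinuousOn.log hct (fun x hx => (hpos x (hsub hx)).ne')).intervalIntegrable_of_Icc ht0
    have hIntInv : IntervalIntegrable (fun u => (r u)⁻¹) MeasureTheory.volume 0 t :=
      (hct.inv₀ (fun x hx => (hpos x (hsub hx)).ne')).intervalIntegrable_of_Icc ht0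
    constructor
    · have hle : (∫ u in (0:ℝ)..t, Real.log (r u)) ≤ ∫ _u in (0:ℝ)..t, Real.log (r t) := by
        apply intervalIntegral.integral_mono_on ht0 hIntLog intervalIntegrable_const
        intro x hx
        exact Real.log_le_log (hpos x (hsub hx)) (hmono (hsub hx) ht0 hx.2)
      rw [intervalIntegral.integral_const, smul_eq_mul, sub_zero] at hle
      have h1 : (1 / t) * (∫ u in (0:ℝ)..t, Real.log (r u)) ≤ Real.log (r t) := by
        rw [div_mul_eq_mul_div, div_le_iff₀ ht]
        linarith [hle]
      have h2 : Real.exp ((1 / t) * ∫ u in (0:ℝ)..t, Real.log (r u)) ≤ r t := by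
        calc Real.exp ((1 / t) * ∫ u in (0:ℝ)..t, Real.log (r u))
            ≤ Real.exp (Real.log (r t)) := Real.exp_le_exp.mpr h1
          _ = r t := Real.exp_log hrt
      exact (one_le_div (Real.exp_pos _)).mpr h2
    · have hle : (∫ _u in (0:ℝ)..t, (r t)⁻¹) ≤ ∫ u in (0:ℝ)..t, (r u)⁻¹ := by
        apply intervalIntegral.integral_mono_on ht0 intervalIntegrable_const hIntInv
        intro x hx
        exact inv_anti₀ (hpos x (hsub hx)) (hmono (hsub hx) ht0 hx.2)
      rw [intervalIntegral.integral_const, smul_eq_mul, sub_zero] at hle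
      have hS : (r t)⁻¹ ≤ (1 / t) * ∫ u in (0:ℝ)..t, (r u)⁻¹ := by
        rw [div_mul_eq_mul_div, le_div_iff₀ ht]
        linarith [hle]
      have hSpos : 0 < (1 / t) * ∫ u in (0:ℝ)..t, (r u)⁻¹ :=
        lt_of_lt_of_le (inv_pos.mpr hrt) hS
      have h2 : ((1 / t) * ∫ u in (0:ℝ)..t, (r u)⁻¹)⁻¹ ≤ r t := by
        have := inv_anti₀ (inv_pos.mpr hrt) hS
        rwa [inv_inv] at this
      exact (one_le_div (inv_pos.mpr hSpos)).mpr h2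
  · intro hanti t ht
    have ht0 : (0:ℝ) ≤ t := le_of_lt ht
    have hsub : Set.Icc (0:ℝ) t ⊆ Set.Ici 0 := Set.Icc_subset_Ici_self
    have hct : ContinuousOn r (Set.Icc 0 t) := hc.mono hsub
    have hrt : 0 < r t := hpos t ht0
    have hIntLog : IntervalIntegrable (fun u => Real.log (r u)) MeasureTheory.volume 0 t :=
      (ContinuousOn.log hct (fun x hx => (hpos x (hsub hx)).ne')).intervalIntegrable_of_Icc ht0
    have hIntInv : IntervalIntegrable (fun u => (r u)⁻¹) MeasureTheory.volume 0 t :=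
      (hct.inv₀ (fun x hx => (hpos x (hsub hx)).ne')).intervalIntegrable_of_Icc ht0
    constructor
    · have hle : (∫ _u in (0:ℝ)..t, Real.log (r t)) ≤ ∫ u in (0:ℝ)..t, Real.log (r u) := by
        apply intervalIntegral.integral_mono_on ht0 intervalIntegrable_const hIntLog
        intro x hx
        exact Real.log_le_log hrt (hanti (hsub hx) ht0 hx.2)
      rw [intervalIntegral.integral_const, smul_eq_mul, sub_zero] at hle
      have h1 : Real.log (r t) ≤ (1 / t) * (∫ u in (0:ℝ)..t, Real.log (r u)) := by
        rw [div_mul_eq_mul_div, le_div_iff₀ ht]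
        linarith [hle]
      have h2 : r t ≤ Real.exp ((1 / t) * ∫ u in (0:ℝ)..t, Real.log (r u)) := by
        calc r t = Real.exp (Real.log (r t)) := (Real.exp_log hrt).symm
          _ ≤ _ := Real.exp_le_exp.mpr h1
      exact (div_le_one (Real.exp_pos _)).mpr h2
    · have hle : (∫ u in (0:ℝ)..t, (r u)⁻¹) ≤ ∫ _u in (0:ℝ)..t, (r t)⁻¹ := by
        apply intervalIntegral.integral_mono_on ht0 hIntInv intervalIntegrable_const
        intro x hx
        exact inv_anti₀ hrt (hanti (hsub hx) ht0 hx.2)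
      rw [intervalIntegral.integral_const, smul_eq_mul, sub_zero] at hle
      have hS : (1 / t) * (∫ u in (0:ℝ)..t, (r u)⁻¹) ≤ (r t)⁻¹ := by
        rw [div_mul_eq_mul_div, div_le_iff₀ ht]
        linarith [hle]
      have hSpos : 0 < (1 / t) * ∫ u in (0:ℝ)..t, (r u)⁻¹ := by
        apply mul_pos (by positivity)
        have hlt : (∫ _u in (0:ℝ)..t, (r 0)⁻¹) ≤ ∫ u in (0:ℝ)..t, (r u)⁻¹ := by
          apply intervalIntegral.integral_mono_on ht0 intervalIntegrable_const hIntInv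
          intro x hx
          exact inv_anti₀ (hpos x (hsub hx)) (hanti Set.self_mem_Ici (hsub hx) hx.1)
        rw [intervalIntegral.integral_const, smul_eq_mul, sub_zero] at hlt
        have : 0 < t * (r 0)⁻¹ := mul_pos ht (inv_pos.mpr (hpos 0 Set.self_mem_Ici))
        linarith
      have h2 : r t ≤ ((1 / t) * ∫ u in (0:ℝ)..t, (r u)⁻¹)⁻¹ := by
        have := inv_anti₀ hSpos hS
        rwa [inv_inv] at this
      exact (div_le_one (inv_pos.mpr hSpos)).mpr h2
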